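/- There exist infinitely many pairwise nonequivalent perfect colorings of H with parameter matrix [[0,3],[1,2]]; that is, the set of perfect colorings of H with this parameter matrix has infinitely many equivalence classes under graph automorphisms of H. -/

import Mathlib

namespace HexGrid

/-! ### A concrete model `K` of the hex grid group -/

structure K where
  fst : ℤ
  snd : ℤ
  eps : Bool
deriving DecidableEq

namespace K

instance : Mul K :=
  ⟨fun g h => ⟨g.fst + (if g.eps then -h.fst else h.fst),
   g.snd + (if g.eps then -h.snd else h.snd), xor g.eps h.eps⟩⟩

instance : One K := ⟨⟨0,0,false⟩⟩

instance : Inv K :=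
  ⟨fun g => ⟨if g.eps then g.fst else -g.fst, if g.eps then g.snd else -g.snd, g.eps⟩⟩

@[simp] lemma mul_def (a b : K) :
    a * b = ⟨a.fst + (if a.eps then -b.fst else b.fst),
      a.snd + (if a.eps then -b.snd else b.snd), xor a.eps b.eps⟩ := rfl

@[simp] lemma one_def : (1 : K) = ⟨0,0,false⟩ := rfl

@[simp] lemma inv_def (a : K) :
    a⁻¹ = ⟨if a.eps then a.fst else -a.fst, if a.eps then a.snd else -a.snd, a.eps⟩ := rfl

instance : Group K where
  mul_assoc a b c := by
    cases a with | mk a1 a2 ae =>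
    cases b with | mk b1 b2 be =>
    cases c with | mk c1 c2 ce =>
    cases ae <;> cases be <;> cases ce <;> simp <;> constructor <;> ring
  one_mul a := by cases a with | mk a1 a2 ae => simp
  mul_one a := by cases a with | mk a1 a2 ae => cases ae <;> simp
  inv_mul_cancel a := by
    cases a with | mk a1 a2 ae =>
    cases ae <;> simp

lemma pow_false (p q : ℤ) : ∀ n : ℕ, (⟨p, q, false⟩ : K) ^ n = ⟨n * p, n * q, false⟩
  | 0 => by simp
  | (n+1) => by
      rw [pow_succ, pow_false p q n]
      simp; constructor <;> ring

lemma zpow_false (p q : ℤ) (a : ℤ) : (⟨p, q, false⟩ : K) ^ a = ⟨a * p, a * q, false⟩ := by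
  cases a with
  | ofNat n => simpa using pow_false p q n
  | negSucc n =>
      rw [zpow_negSucc, pow_false p q (n+1)]
      simp [Int.negSucc_eq]; constructor <;> ring

end K

end HexGrid

namespace HexGrid

/-! ### The presented group -/


/-- Relations of the hexagonal grid group: x² = y² = z² = (x·y·z)² = 1. -/
def hexRels : Set (FreeGroup (Fin 3)) :=
  {FreeGroup.of 0 * FreeGroup.of 0,
   FreeGroup.of 1 * FreeGroup.of 1,
   FreeGroup.of 2 * FreeGroup.of 2,
   FreeGroup.of 0 * FreeGroup.of 1 * FreeGroup.of 2 *
     (FreeGroup.of 0 * FreeGroup.of 1 * FreeGroup.of 2)}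

/-- The group `G = ⟨x, y, z ∣ x² = y² = z² = (x·y·z)² = 1⟩`. -/
abbrev G := PresentedGroup hexRels

/-- The generators of `G`. -/
def gen (i : Fin 3) : G := PresentedGroup.of i

def x : G := gen 0
def y : G := gen 1
def z : G := gen 2

lemma gen_mul_self (i : Fin 3) : gen i * gen i = 1 := by
  have h : FreeGroup.of i * FreeGroup.of i ∈ Subgroup.normalClosure hexRels :=
    Subgroup.subset_normalClosure (by fin_cases i <;> simp [hexRels])
  exact (QuotientGroup.eq_one_iff _).mpr h

lemma xyz_mul_self : (x * y * z) * (x * y * z) = 1 := by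
  have h : (FreeGroup.of 0 * FreeGroup.of 1 * FreeGroup.of 2 *
      (FreeGroup.of 0 * FreeGroup.of 1 * FreeGroup.of 2) : FreeGroup (Fin 3))
      ∈ Subgroup.normalClosure hexRels :=
    Subgroup.subset_normalClosure (by simp [hexRels])
  have h2 := (QuotientGroup.eq_one_iff _).mpr h
  have h3 : PresentedGroup.mk hexRels (FreeGroup.of 0 * FreeGroup.of 1 * FreeGroup.of 2 *
      (FreeGroup.of 0 * FreeGroup.of 1 * FreeGroup.of 2)) = 1 := h2
  simpa [x, y, z, gen, PresentedGroup.of, map_mul] using h3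

lemma gen_inv (i : Fin 3) : (gen i)⁻¹ = gen i :=
  inv_eq_of_mul_eq_one_right (gen_mul_self i)

@[simp] lemma x_inv : x⁻¹ = x := gen_inv 0
@[simp] lemma y_inv : y⁻¹ = y := gen_inv 1
@[simp] lemma z_inv : z⁻¹ = z := gen_inv 2
@[simp] lemma x_mul_x : x * x = 1 := gen_mul_self 0
@[simp] lemma y_mul_y : y * y = 1 := gen_mul_self 1
@[simp] lemma z_mul_z : z * z = 1 := gen_mul_self 2
@[simp] lemma x_cancel (w : G) : x * (x * w) = w := by rw [← mul_assoc, x_mul_x, one_mul]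
@[simp] lemma y_cancel (w : G) : y * (y * w) = w := by rw [← mul_assoc, y_mul_y, one_mul]
@[simp] lemma z_cancel (w : G) : z * (z * w) = w := by rw [← mul_assoc, z_mul_z, one_mul]

lemma xyz_eq_zyx : x * y * z = z * y * x := by
  have h : (x * y * z)⁻¹ = x * y * z := by
    rw [inv_eq_of_mul_eq_one_right xyz_mul_self]
  have h2 : (x * y * z)⁻¹ = z * y * x := by
    rw [mul_inv_rev, mul_inv_rev]; simp [mul_assoc]
  rw [← h, h2]

lemma zxy_eq_yxz : z * (x * y) = y * (x * z) := by
  have h2 : z * (x * y * z) * z = z * (z * y * x) * z := by rw [xyz_eq_zyx]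
  calc z * (x * y) = z * (x * y * z) * z := by simp [mul_assoc]
    _ = z * (z * y * x) * z := h2
    _ = y * (x * z) := by simp [mul_assoc]

/-! ### Translations -/

def t : G := x * y
def s : G := y * z

lemma ts_comm : t * s = s * t := by
  have h1 : t * s = x * z := by simp [t, s, mul_assoc]
  have h2 : s * t = x * z := by
    simp only [s, t, mul_assoc]
    rw [zxy_eq_yxz]; simp
  rw [h1, h2]

lemma x_mul_t : x * t = t⁻¹ * x := by
  simp [t, mul_assoc, mul_inv_rev]

lemma x_mul_s : x * s = s⁻¹ * x := by
  simp only [s, mul_inv_rev, y_inv, z_inv]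
  calc x * (y * z) = x * y * z := by rw [mul_assoc]
    _ = z * y * x := xyz_eq_zyx
    _ = z * (y * x) := by rw [mul_assoc]

lemma conj_zpow {g w : G} (hg : g⁻¹ = g) (h : g * w = w⁻¹ * g) (a : ℤ) :
    g * w ^ a = w ^ (-a) * g := by
  have hgg : g * g = 1 := by nth_rewrite 1 [← hg]; exact inv_mul_cancel g
  have hc : g * w * g⁻¹ = w⁻¹ := by rw [hg, h, mul_assoc, hgg, mul_one]
  have h2 : g * w ^ a * g⁻¹ = (g * w * g⁻¹) ^ a := by
    simpa [MulAut.conj_apply, mul_assoc] using map_zpow (MulAut.conj g) w a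
  rw [hc, inv_zpow, ← zpow_neg] at h2
  calc g * w ^ a = g * w ^ a * g⁻¹ * g := by simp
    _ = w ^ (-a) * g := by rw [h2]

lemma x_mul_t_zpow (a : ℤ) : x * t ^ a = t ^ (-a) * x := conj_zpow x_inv x_mul_t a
lemma x_mul_s_zpow (a : ℤ) : x * s ^ a = s ^ (-a) * x := conj_zpow x_inv x_mul_s a

lemma s_t_zpow (a b : ℤ) (w : G) : s ^ b * (t ^ a * w) = t ^ a * (s ^ b * w) := by
  rw [← mul_assoc, ((Commute.zpow_zpow ts_comm a b).symm).eq, mul_assoc]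

lemma tsw (A B C D : ℤ) (w : G) :
    t ^ A * (s ^ B * (t ^ C * (s ^ D * w))) = t ^ (A + C) * (s ^ (B + D) * w) := by
  rw [s_t_zpow C B, ← mul_assoc (t ^ A) (t ^ C), ← zpow_add,
    ← mul_assoc (s ^ B) (s ^ D) w, ← zpow_add]

lemma x_ts (C D : ℤ) (w : G) :
    x * (t ^ C * (s ^ D * w)) = t ^ (-C) * (s ^ (-D) * (x * w)) := by
  rw [← mul_assoc x (t ^ C), x_mul_t_zpow, mul_assoc, ← mul_assoc x (s ^ D) w,
    x_mul_s_zpow, mul_assoc]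

lemma tsw' (A B C D : ℤ) :
    t ^ A * (s ^ B * (t ^ C * s ^ D)) = t ^ (A + C) * s ^ (B + D) := by
  simpa using tsw A B C D 1

lemma x_ts' (C D : ℤ) : x * (t ^ C * s ^ D) = t ^ (-C) * (s ^ (-D) * x) := by
  simpa using x_ts C D 1

/-! ### The isomorphism between `G` and `K` -/

def kgen : Fin 3 → K
  | 0 => ⟨0, 0, true⟩
  | 1 => ⟨-1, 0, true⟩
  | 2 => ⟨-1, -1, true⟩

lemma kgen_rels : ∀ r ∈ hexRels, FreeGroup.lift kgen r = 1 := by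
  intro r hr
  rcases hr with h | h | h | h <;> subst h <;> simp [kgen]

def pi : G →* K := PresentedGroup.toGroup kgen_rels

@[simp] lemma pi_gen (i : Fin 3) : pi (gen i) = kgen i :=
  PresentedGroup.toGroup.of kgen_rels

@[simp] lemma pi_x : pi x = ⟨0,0,true⟩ := pi_gen 0
@[simp] lemma pi_y : pi y = ⟨-1,0,true⟩ := pi_gen 1
@[simp] lemma pi_z : pi z = ⟨-1,-1,true⟩ := pi_gen 2
@[simp] lemma pi_t : pi t = ⟨1,0,false⟩ := by simp [t, map_mul]
@[simp] lemma pi_s : pi s = ⟨0,1,false⟩ := by simp [s, map_mul]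

/-- The inverse homomorphism `K →* G`. -/
def rho : K →* G where
  toFun r := t ^ r.fst * (s ^ r.snd * (if r.eps then x else 1))
  map_one' := by simp
  map_mul' a b := by
    cases a with | mk a1 a2 ae =>
    cases b with | mk b1 b2 be =>
    cases ae <;> cases be
    · simp only [K.mul_def]; simp
      rw [mul_assoc (t ^ a1), tsw']
    · simp only [K.mul_def]; simp
      rw [mul_assoc (t ^ a1), tsw]
    · simp only [K.mul_def]; simp
      rw [mul_assoc (t ^ a1), mul_assoc (s ^ a2) x, x_ts', tsw]
    · simp only [K.mul_def]; simp
      rw [mul_assoc (t ^ a1), mul_assoc (s ^ a2) x, x_ts, x_mul_x, mul_one, tsw']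

end HexGrid

namespace HexGrid

@[simp] lemma rho_apply (r : K) :
    rho r = t ^ r.fst * (s ^ r.snd * (if r.eps then x else 1)) := rfl

lemma st_eq_xz : s * t = x * z := by
  simp only [s, t, mul_assoc]
  rw [zxy_eq_yxz]; simp

lemma rho_pi_gen (i : Fin 3) : rho (pi (gen i)) = gen i := by
  fin_cases i
  · show rho (pi (gen 0)) = gen 0
    rw [pi_gen]
    show rho ⟨0,0,true⟩ = gen 0
    simp; rfl
  · show rho (pi (gen 1)) = gen 1
    rw [pi_gen]
    show rho ⟨-1,0,true⟩ = gen 1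
    simp only [rho_apply, zpow_neg, zpow_one, zpow_zero, one_mul, if_true]
    rw [t, mul_inv_rev]
    simp [mul_assoc]; rfl
  · show rho (pi (gen 2)) = gen 2
    rw [pi_gen]
    show rho ⟨-1,-1,true⟩ = gen 2
    simp only [rho_apply, zpow_neg, zpow_one, if_true]
    rw [← mul_assoc, ← mul_inv_rev, st_eq_xz, mul_inv_rev, mul_assoc]
    simp [mul_assoc]; rfl

lemma rho_pi (g : G) : rho (pi g) = g := by
  have h : rho.comp pi = MonoidHom.id G := by
    ext i
    show rho (pi (PresentedGroup.of i)) = PresentedGroup.of i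
    exact rho_pi_gen i
  simpa using DFunLike.congr_fun h g

lemma pi_rho (r : K) : pi (rho r) = r := by
  cases r with | mk p q e =>
  simp only [rho_apply, map_mul, map_zpow, pi_t, pi_s, K.zpow_false]
  cases e <;> simp

lemma pi_injective : Function.Injective pi :=
  Function.LeftInverse.injective rho_pi

lemma pi_surjective : Function.Surjective pi := fun r => ⟨rho r, pi_rho r⟩

end HexGrid

namespace HexGrid

/-- The infinite hexagonal grid `H`: the Cayley graph of `G` with respect to `{x, y, z}`;
`u` and `v` are adjacent iff `v ∈ {u·x, u·y, u·z}`. -/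
def H : SimpleGraph G where
  Adj u v := u ≠ v ∧ ∃ i : Fin 3, v = u * gen i
  symm := by
    constructor
    rintro u v ⟨hne, i, rfl⟩
    exact ⟨hne.symm, i, by rw [mul_assoc, gen_mul_self, mul_one]⟩
  loopless := by constructor; rintro u ⟨hne, -⟩; exact hne rfl

lemma gen_ne_one (i : Fin 3) : gen i ≠ 1 := by
  intro h
  have := congrArg pi h
  rw [pi_gen, map_one] at this
  fin_cases i <;> simp [kgen] at this

lemma adj_mul_gen (u : G) (i : Fin 3) : H.Adj u (u * gen i) := by
  refine ⟨fun h => gen_ne_one i ?_, ⟨i, rfl⟩⟩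
  have h2 : u * 1 = u * gen i := by rw [mul_one]; exact h
  exact (mul_left_cancel h2).symm

lemma adj_iff {u v : G} : H.Adj u v ↔ ∃ i, v = u * gen i :=
  ⟨fun h => h.2, fun ⟨i, h⟩ => h ▸ adj_mul_gen u i⟩

/-- product of a word of generators -/
def wprod (l : List (Fin 3)) : G := (l.map gen).prod

@[simp] lemma wprod_nil : wprod [] = 1 := rfl
lemma wprod_cons (i : Fin 3) (l : List (Fin 3)) : wprod (i :: l) = gen i * wprod l := by
  simp [wprod]

lemma exists_walk (l : List (Fin 3)) (u : G) :
    ∃ w : H.Walk u (u * wprod l), w.length = l.length := by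
  induction l generalizing u with
  | nil => exact ⟨(SimpleGraph.Walk.nil' u).copy rfl (by simp), by rw [SimpleGraph.Walk.length_copy]; rfl⟩
  | cons i l ih =>
    obtain ⟨w, hw⟩ := ih (u * gen i)
    refine ⟨(SimpleGraph.Walk.cons (adj_mul_gen u i) w).copy rfl ?_, ?_⟩
    · rw [wprod_cons, mul_assoc]
    · simp [hw]

lemma reach_word (u : G) (l : List (Fin 3)) : H.Reachable u (u * wprod l) :=
  (exists_walk l u).elim fun w _ => ⟨w⟩

lemma dist_word_le (u : G) (l : List (Fin 3)) : H.dist u (u * wprod l) ≤ l.length := by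
  obtain ⟨w, hw⟩ := exists_walk l u
  exact hw ▸ SimpleGraph.dist_le w

/-! ### parity and Lipschitz functions -/

def par (g : G) : ZMod 2 := if (pi g).eps then 1 else 0

lemma adj_par {u v : G} (h : H.Adj u v) : par v = par u + 1 := by
  obtain ⟨i, rfl⟩ := h.2
  have : (pi (u * gen i)).eps = !(pi u).eps := by
    rw [map_mul, pi_gen]
    fin_cases i <;> simp [kgen, Bool.xor_true]
  simp only [par, this]
  cases (pi u).eps <;> simp <;> decide

lemma walk_par {u v : G} (w : H.Walk u v) : (w.length : ZMod 2) = par u + par v := by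
  induction w with
  | nil =>
    simp only [SimpleGraph.Walk.length_nil, Nat.cast_zero]
    rw [← two_mul, show (2 : ZMod 2) = 0 from rfl, zero_mul]
  | cons h w ih =>
    rw [SimpleGraph.Walk.length_cons]
    push_cast
    rw [ih, adj_par h]
    ring_nf
    rw [show (2 : ZMod 2) = 0 by rfl]
    ring

lemma dist_par {u v : G} (h : H.Reachable u v) : (H.dist u v : ZMod 2) = par u + par v := by
  obtain ⟨w, hw⟩ := h.exists_walk_length_eq_dist
  rw [← hw, walk_par w]

/-- Lipschitz function machinery -/
lemma walk_lip (f : G → ℤ) (hf : ∀ {u v : G}, H.Adj u v → |f v - f u| ≤ 1)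
    {u v : G} (w : H.Walk u v) : |f v - f u| ≤ w.length := by
  induction w with
  | nil => simp
  | cons h w ih =>
    rw [SimpleGraph.Walk.length_cons]
    have h1 := hf h
    have h2 := ih
    rw [abs_le] at h1 h2 ⊢
    push_cast
    omega

lemma dist_lip (f : G → ℤ) (hf : ∀ {u v : G}, H.Adj u v → |f v - f u| ≤ 1)
    {u v : G} (h : H.Reachable u v) : |f v - f u| ≤ H.dist u v := by
  obtain ⟨w, hw⟩ := h.exists_walk_length_eq_dist
  rw [← hw]; exact walk_lip f hf w

def F1 (g : G) : ℤ := 2 * (pi g).fst + (if (pi g).eps then 1 else 0)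
def F2 (g : G) : ℤ := 2 * (pi g).snd + (if (pi g).eps then 1 else 0)
def F3 (g : G) : ℤ := 2 * ((pi g).fst - (pi g).snd) + (if (pi g).eps then 1 else 0)

lemma adj_F1 {u v : G} (h : H.Adj u v) : |F1 v - F1 u| ≤ 1 := by
  obtain ⟨i, rfl⟩ := h.2
  simp only [F1, map_mul, pi_gen]
  fin_cases i <;> cases hu : (pi u).eps <;>
    simp [kgen, hu, abs_le] <;> omega

lemma adj_F2 {u v : G} (h : H.Adj u v) : |F2 v - F2 u| ≤ 1 := by
  obtain ⟨i, rfl⟩ := h.2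
  simp only [F2, map_mul, pi_gen]
  fin_cases i <;> cases hu : (pi u).eps <;>
    simp [kgen, hu, abs_le] <;> omega

lemma adj_F3 {u v : G} (h : H.Adj u v) : |F3 v - F3 u| ≤ 1 := by
  obtain ⟨i, rfl⟩ := h.2
  simp only [F3, map_mul, pi_gen]
  fin_cases i <;> cases hu : (pi u).eps <;>
    simp [kgen, hu, abs_le] <;> omega

end HexGrid

namespace HexGrid

/-- code membership in the concrete model: odd column, and parity condition -/
def codeK (c : ℤ → ZMod 2) (r : K) : Prop :=
  r.fst % 2 = 1 ∧ (r.snd : ZMod 2) + (if r.eps then 1 else 0) = c r.fst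

instance (c : ℤ → ZMod 2) (r : K) : Decidable (codeK c r) := by
  unfold codeK; infer_instance

def colK (c : ℤ → ZMod 2) (r : K) : Fin 2 := if codeK c r then 0 else 1

def col (c : ℤ → ZMod 2) (g : G) : Fin 2 := colK c (pi g)

lemma count3 (c : ℤ → ZMod 2) (w : K) (j : Fin 2) :
    ((Finset.univ.filter fun i : Fin 3 => colK c (w * kgen i) = j)).card
      = !![0,3;1,2] (colK c w) j := by
  cases w with | mk a b e =>
  rw [Finset.card_filter, Fin.sum_univ_three]
  have key : ∀ u v : ZMod 2, (u + 1 = v) ↔ ¬(u = v) := by decide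
  cases e
  · by_cases ha : a % 2 = 1
    · have ha1 : ¬((a + -1) % 2 = 1) := by omega
      simp only [K.mul_def, kgen]
      simp only [colK, codeK]
      simp [ha, ha1]
      by_cases hb : (b : ZMod 2) = c a
      · have hb' : ¬((b : ZMod 2) + 1 = c a) := by rw [key]; simpa using hb
        simp [hb, hb']
        fin_cases j <;> simp
      · have hb' : (b : ZMod 2) + 1 = c a := (key _ _).mpr hb
        simp [hb, hb']
        fin_cases j <;> simp
    · have ha1 : ((a + -1) % 2 = 1) := by omega
      simp only [K.mul_def, kgen]
      simp only [colK, codeK]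
      simp [ha, ha1]
      by_cases hb : (b : ZMod 2) = c (a + -1)
      · have hb' : ¬((b : ZMod 2) + 1 = c (a + -1)) := by rw [key]; simpa using hb
        simp [hb, hb']
        fin_cases j <;> simp <;> rw [add_assoc, show (1 : ZMod 2) + 1 = 0 from rfl, add_zero]
      · have hb' : (b : ZMod 2) + 1 = c (a + -1) := (key _ _).mpr hb
        simp [hb, hb']
        fin_cases j <;> simp
  · by_cases ha : a % 2 = 1
    · have ha1 : ¬((a + 1) % 2 = 1) := by omega
      simp only [K.mul_def, kgen]
      simp only [colK, codeK]
      simp [ha, ha1]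
      by_cases hb : (b : ZMod 2) + 1 = c a
      · have hb' : ¬((b : ZMod 2) = c a) := by rw [← key]; simpa using hb
        simp [hb, hb']
        fin_cases j <;> simp
      · have hb' : (b : ZMod 2) = c a := by
          by_contra hc
          exact hb ((key _ _).mpr hc)
        simp [hb, hb']
        fin_cases j <;> simp
    · have ha1 : ((a + 1) % 2 = 1) := by omega
      simp only [K.mul_def, kgen]
      simp only [colK, codeK]
      simp [ha, ha1]
      by_cases hb : (b : ZMod 2) = c (a + 1)
      · have hb' : ¬((b : ZMod 2) + 1 = c (a + 1)) := by rw [key]; simpa using hb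
        simp [hb, hb']
        fin_cases j <;> simp
      · have hb' : (b : ZMod 2) + 1 = c (a + 1) := (key _ _).mpr hb
        simp [hb, hb']
        fin_cases j <;> simp


lemma gen_injective : Function.Injective gen := by
  intro i j h
  have h2 : kgen i = kgen j := by rw [← pi_gen, ← pi_gen, h]
  fin_cases i <;> fin_cases j <;> simp_all [kgen]

lemma nbr_ncard (φ : G → Fin 2) (u : G) (j : Fin 2) :
    Set.ncard {v | H.Adj u v ∧ φ v = j}
      = (Finset.univ.filter fun i : Fin 3 => φ (u * gen i) = j).card := by
  haveI := Classical.decEq G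
  have hset : {v | H.Adj u v ∧ φ v = j}
      = ↑((Finset.univ.filter fun i : Fin 3 => φ (u * gen i) = j).image
          (fun i => u * gen i)) := by
    ext v
    simp only [Set.mem_setOf_eq, Finset.coe_image, Set.mem_image, Finset.mem_coe,
      Finset.mem_filter, Finset.mem_univ, true_and, adj_iff]
    constructor
    · rintro ⟨⟨i, rfl⟩, hj⟩; exact ⟨i, hj, rfl⟩
    · rintro ⟨i, hj, rfl⟩; exact ⟨⟨i, rfl⟩, hj⟩
  rw [hset, Set.ncard_coe_finset,
    Finset.card_image_of_injective _ (fun i j h => gen_injective (mul_left_cancel h))]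

lemma col_isPerfect (c : ℤ → ZMod 2) (u : G) (j : Fin 2) :
    Set.ncard {v | H.Adj u v ∧ col c v = j} = !![0,3;1,2] (col c u) j := by
  rw [nbr_ncard]
  have heq : Finset.univ.filter (fun i : Fin 3 => col c (u * gen i) = j)
      = Finset.univ.filter (fun i : Fin 3 => colK c (pi u * kgen i) = j) := by
    apply Finset.filter_congr
    intro i _
    simp [col, map_mul]
  rw [heq]
  exact count3 c (pi u) j

end HexGrid

namespace HexGrid

lemma col_zero_iff (c : ℤ → ZMod 2) (g : G) : col c g = 0 ↔ codeK c (pi g) := by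
  by_cases h : codeK c (pi g) <;> simp [col, colK, h]

lemma intCast_zmod2 (n : ℤ) : (n : ZMod 2) = if n % 2 = 0 then 0 else 1 := by
  conv_lhs => rw [← Int.mul_ediv_add_emod n 2]
  push_cast
  rw [show (2 : ZMod 2) = 0 by decide]
  rcases (show n % 2 = 0 ∨ n % 2 = 1 by omega) with h | h <;> rw [h] <;> simp

/-- the nine candidate offsets -/
def E9 : Finset (ℤ × ℤ) := {(0,2),(0,-2),(2,0),(2,1),(2,2),(-2,0),(-2,-1),(-2,-2)}

/-- the vertex at a given coordinate offset from `u` -/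
def mem4 (u : G) (o : ℤ × ℤ) : G :=
  u * rho ⟨if (pi u).eps then -o.1 else o.1, if (pi u).eps then -o.2 else o.2, false⟩

lemma pi_mem4 (u : G) (o : ℤ × ℤ) :
    pi (mem4 u o) = ⟨(pi u).fst + o.1, (pi u).snd + o.2, (pi u).eps⟩ := by
  unfold mem4
  rw [map_mul, pi_rho]
  cases h : (pi u).eps <;> simp [h]

lemma mem4_inj (u : G) : Function.Injective (mem4 u) := by
  intro o o' h
  have h2 := congrArg pi h
  rw [pi_mem4, pi_mem4] at h2
  cases o; cases o'
  simp only [K.mk.injEq] at h2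
  simp only [Prod.mk.injEq] at *
  omega

lemma dist_eq4_aux (u : G) (o : ℤ × ℤ) (L : List (Fin 3)) (hL : L.length = 4)
    (hw : mem4 u o = u * wprod L)
    (h4 : o.1 = 2 ∨ o.1 = -2 ∨ (o.1 = 0 ∧ (o.2 = 2 ∨ o.2 = -2))) :
    H.dist u (mem4 u o) = 4 := by
  have hub : H.dist u (mem4 u o) ≤ 4 := by
    rw [hw]; simpa [hL] using dist_word_le u L
  have hr : H.Reachable u (mem4 u o) := by rw [hw]; exact reach_word u L
  have e1 : F1 (mem4 u o) - F1 u = 2 * o.1 := by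
    simp only [F1, pi_mem4]; ring
  have e2 : F2 (mem4 u o) - F2 u = 2 * o.2 := by
    simp only [F2, pi_mem4]; ring
  have h1 := dist_lip F1 adj_F1 hr
  have h2 := dist_lip F2 adj_F2 hr
  rw [e1, abs_le] at h1
  rw [e2, abs_le] at h2
  rcases h4 with h | h | ⟨h, h' | h'⟩ <;> omega

lemma dist_mem4 (u : G) (o : ℤ × ℤ) (ho : o ∈ E9) : H.dist u (mem4 u o) = 4 := by
  have hmem : ∀ (p q : ℤ) (L : List (Fin 3)), L.length = 4 →
      pi (wprod L) = ⟨(if (pi u).eps then -p else p), (if (pi u).eps then -q else q), false⟩ →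
      mem4 u (p, q) = u * wprod L := by
    intro p q L _ hpi
    unfold mem4
    congr 1
    apply pi_injective
    rw [pi_rho, hpi]
  fin_cases ho <;> cases heps : (pi u).eps
  · exact dist_eq4_aux u _ [1,2,1,2] rfl
      (hmem _ _ _ rfl (by simp [wprod, map_mul, kgen, heps])) (by norm_num)
  · exact dist_eq4_aux u _ [2,1,2,1] rfl
      (hmem _ _ _ rfl (by simp [wprod, map_mul, kgen, heps])) (by norm_num)
  · exact dist_eq4_aux u _ [2,1,2,1] rfl
      (hmem _ _ _ rfl (by simp [wprod, map_mul, kgen, heps])) (by norm_num)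
  · exact dist_eq4_aux u _ [1,2,1,2] rfl
      (hmem _ _ _ rfl (by simp [wprod, map_mul, kgen, heps])) (by norm_num)
  · exact dist_eq4_aux u _ [0,1,0,1] rfl
      (hmem _ _ _ rfl (by simp [wprod, map_mul, kgen, heps])) (by norm_num)
  · exact dist_eq4_aux u _ [1,0,1,0] rfl
      (hmem _ _ _ rfl (by simp [wprod, map_mul, kgen, heps])) (by norm_num)
  · exact dist_eq4_aux u _ [0,1,0,2] rfl
      (hmem _ _ _ rfl (by simp [wprod, map_mul, kgen, heps])) (by norm_num)
  · exact dist_eq4_aux u _ [1,0,2,0] rfl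
      (hmem _ _ _ rfl (by simp [wprod, map_mul, kgen, heps])) (by norm_num)
  · exact dist_eq4_aux u _ [0,2,0,2] rfl
      (hmem _ _ _ rfl (by simp [wprod, map_mul, kgen, heps])) (by norm_num)
  · exact dist_eq4_aux u _ [2,0,2,0] rfl
      (hmem _ _ _ rfl (by simp [wprod, map_mul, kgen, heps])) (by norm_num)
  · exact dist_eq4_aux u _ [1,0,1,0] rfl
      (hmem _ _ _ rfl (by simp [wprod, map_mul, kgen, heps])) (by norm_num)
  · exact dist_eq4_aux u _ [0,1,0,1] rfl
      (hmem _ _ _ rfl (by simp [wprod, map_mul, kgen, heps])) (by norm_num)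
  · exact dist_eq4_aux u _ [1,0,2,0] rfl
      (hmem _ _ _ rfl (by simp [wprod, map_mul, kgen, heps])) (by norm_num)
  · exact dist_eq4_aux u _ [0,1,0,2] rfl
      (hmem _ _ _ rfl (by simp [wprod, map_mul, kgen, heps])) (by norm_num)
  · exact dist_eq4_aux u _ [2,0,2,0] rfl
      (hmem _ _ _ rfl (by simp [wprod, map_mul, kgen, heps])) (by norm_num)
  · exact dist_eq4_aux u _ [0,2,0,2] rfl
      (hmem _ _ _ rfl (by simp [wprod, map_mul, kgen, heps])) (by norm_num)

end HexGrid

namespace HexGrid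

lemma K_ext {r r' : K} (h1 : r.fst = r'.fst) (h2 : r.snd = r'.snd) (h3 : r.eps = r'.eps) :
    r = r' := by cases r; cases r'; simp_all

lemma zmod2_cast_eq_zero {n : ℤ} (h : (n : ZMod 2) = 0) : n % 2 = 0 := by
  rw [intCast_zmod2] at h
  by_contra hc
  rw [if_neg hc] at h
  exact one_ne_zero h

lemma zmod2_cast_eq_one {n : ℤ} (h : (n : ZMod 2) = 1) : n % 2 = 1 := by
  rw [intCast_zmod2] at h
  by_cases hc : n % 2 = 0
  · rw [if_pos hc] at h; exact absurd h.symm one_ne_zero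
  · omega

/-- The master lemma: the number of code vertices at distance 4 from a code vertex. -/
lemma N4_master (c : ℤ → ZMod 2) (u : G) (hu : col c u = 0) :
    Set.ncard {w | col c w = 0 ∧ H.dist u w = 4}
      = 4 + (if c ((pi u).fst + -2) = c (pi u).fst then 1 else 0)
          + (if c ((pi u).fst + 2) = c (pi u).fst then 1 else 0) := by
  classical
  obtain ⟨ha, hb⟩ := (col_zero_iff c u).mp hu
  set a := (pi u).fst with ha_def
  set P : ℤ × ℤ → Prop := fun o => ((o.2 : ℤ) : ZMod 2) + c a = c (a + o.1) with hP
  have key : ∀ u v : ZMod 2, (u + 1 = v) ↔ ¬(u = v) := by decide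
  have hset : {w | col c w = 0 ∧ H.dist u w = 4} = (mem4 u) '' ↑(E9.filter P) := by
    ext w
    simp only [Set.mem_setOf_eq, Set.mem_image, Finset.mem_coe, Finset.mem_filter]
    constructor
    · rintro ⟨hw0, hwd⟩
      have hr : H.Reachable u w := SimpleGraph.Reachable.of_dist_ne_zero (by omega)
      -- same parity
      have hsum : par u + par w = 0 := by
        have h4 := dist_par hr
        rw [hwd] at h4
        rw [← h4]; decide
      have heps : (pi w).eps = (pi u).eps := by
        cases h1e : (pi u).eps <;> cases h2e : (pi w).eps <;>
          simp only [par, h1e, h2e, if_true, if_false] at hsum ⊢ <;> first | rfl | (exfalso; revert hsum; decide)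
      -- Lipschitz bounds
      have hF1 := dist_lip F1 adj_F1 hr
      have hF2 := dist_lip F2 adj_F2 hr
      have hF3 := dist_lip F3 adj_F3 hr
      rw [hwd] at hF1 hF2 hF3
      have d1 : F1 w - F1 u = 2*((pi w).fst - a) := by simp only [F1, heps, ← ha_def]; ring
      have d2 : F2 w - F2 u = 2*((pi w).snd - (pi u).snd) := by
        simp only [F2, heps]; ring
      have d3 : F3 w - F3 u = 2*(((pi w).fst - a) - ((pi w).snd - (pi u).snd)) := by
        simp only [F3, heps, ← ha_def]; ring
      rw [d1, abs_le] at hF1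
      rw [d2, abs_le] at hF2
      rw [d3, abs_le] at hF3
      push_cast at hF1 hF2 hF3
      obtain ⟨hwa, hwb⟩ := (col_zero_iff c w).mp hw0
      -- the ZMod 2 relation between the offsets
      have hq : (((pi w).snd - (pi u).snd : ℤ) : ZMod 2) + c a = c ((pi w).fst) := by
        rw [heps] at hwb
        push_cast
        linear_combination hwb - hb
      have hwne : w ≠ u := by
        intro h; rw [h] at hwd; rw [SimpleGraph.dist_self] at hwd; omega
      set p : ℤ := (pi w).fst - a with hp_def
      set q : ℤ := (pi w).snd - (pi u).snd with hq_def
      have hfst : (pi w).fst = a + p := by omega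
      have hpcases : p = 0 ∨ p = 2 ∨ p = -2 := by omega
      refine ⟨(p, q), ⟨?_, ?_⟩, ?_⟩
      · -- (p,q) ∈ E9
        show (p, q) ∈ E9
        rcases hpcases with hp | hp | hp
        · -- p = 0 : q even, q = ±2
          have hca : c ((pi w).fst) = c a := by rw [hfst, hp, add_zero]
          have hq0 : (q : ZMod 2) = 0 := by
            have := hq
            rw [hca] at this
            have h2 := add_right_cancel (this.trans (zero_add (c a)).symm)
            exact h2
          have hqe := zmod2_cast_eq_zero hq0
          have hqne : q ≠ 0 := by
            intro h0
            exact hwne (pi_injective (K_ext (by omega) (by omega) heps))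
          have hq2 : q = 2 ∨ q = -2 := by omega
          rcases hq2 with hq2 | hq2 <;> simp [E9, hp, hq2]
        · -- p = 2 : 0 ≤ q ≤ 2
          have hqr : q = 0 ∨ q = 1 ∨ q = 2 := by omega
          rcases hqr with hq2 | hq2 | hq2 <;> simp [E9, hp, hq2]
        · have hqr : q = 0 ∨ q = -1 ∨ q = -2 := by omega
          rcases hqr with hq2 | hq2 | hq2 <;> simp [E9, hp, hq2]
      · -- P (p, q)
        show ((q : ℤ) : ZMod 2) + c a = c (a + p)
        rw [← hfst]; exact hq
      · -- mem4 u (p,q) = w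
        apply pi_injective
        rw [pi_mem4]
        refine K_ext ?_ ?_ heps.symm
        · show (pi u).fst + (p, q).1 = (pi w).fst
          simp only []
          omega
        · show (pi u).snd + (p, q).2 = (pi w).snd
          simp only []
          omega
    · rintro ⟨o, ⟨ho9, hoP⟩, rfl⟩
      refine ⟨?_, dist_mem4 u o ho9⟩
      rw [col_zero_iff, pi_mem4]
      constructor
      · have ho1 : o.1 % 2 = 0 := by fin_cases ho9 <;> decide
        show ((pi u).fst + o.1) % 2 = 1
        omega
      · show (((pi u).snd + o.2 : ℤ) : ZMod 2) + _ = c ((pi u).fst + o.1)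
        push_cast
        rw [← ha_def]
        linear_combination hb + hoP
  rw [hset, Set.ncard_image_of_injOn ((mem4_inj u).injOn),
    Set.ncard_coe_finset]
  have c1i : (((1:ℤ)) : ZMod 2) = 1 := by rw [intCast_zmod2]; norm_num
  have c2i : (((2:ℤ)) : ZMod 2) = 0 := by rw [intCast_zmod2]; norm_num
  have cm1i : (((-1:ℤ)) : ZMod 2) = 1 := by rw [intCast_zmod2]; norm_num
  have cm2i : (((-2:ℤ)) : ZMod 2) = 0 := by rw [intCast_zmod2]; norm_num
  have P02 : P (0, 2) := by
    show ((2:ℤ) : ZMod 2) + c a = c (a + 0)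
    rw [c2i, zero_add, add_zero]
  have P0m2 : P (0, -2) := by
    show ((-2:ℤ) : ZMod 2) + c a = c (a + 0)
    rw [cm2i, zero_add, add_zero]
  have e20 : P (2, 0) ↔ c (a + 2) = c a := by
    show ((0:ℤ) : ZMod 2) + c a = c (a + 2) ↔ _
    rw [Int.cast_zero, zero_add]; exact eq_comm
  have e21 : P (2, 1) ↔ ¬(c (a + 2) = c a) := by
    show ((1:ℤ) : ZMod 2) + c a = c (a + 2) ↔ _
    rw [c1i, add_comm, key]; exact not_congr eq_comm
  have e22 : P (2, 2) ↔ c (a + 2) = c a := by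
    show ((2:ℤ) : ZMod 2) + c a = c (a + 2) ↔ _
    rw [c2i, zero_add]; exact eq_comm
  have em0 : P (-2, 0) ↔ c (a + -2) = c a := by
    show ((0:ℤ) : ZMod 2) + c a = c (a + -2) ↔ _
    rw [Int.cast_zero, zero_add]; exact eq_comm
  have em1 : P (-2, -1) ↔ ¬(c (a + -2) = c a) := by
    show ((-1:ℤ) : ZMod 2) + c a = c (a + -2) ↔ _
    rw [cm1i, add_comm, key]; exact not_congr eq_comm
  have em2 : P (-2, -2) ↔ c (a + -2) = c a := by
    show ((-2:ℤ) : ZMod 2) + c a = c (a + -2) ↔ _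
    rw [cm2i, zero_add]; exact eq_comm
  by_cases h1 : c (a + 2) = c a <;> by_cases h2 : c (a + -2) = c a
  · rw [if_pos h1, if_pos h2]
    unfold E9
    rw [Finset.filter_insert, if_pos P02, Finset.filter_insert, if_pos P0m2,
      Finset.filter_insert, if_pos (e20.mpr h1), Finset.filter_insert,
      if_neg (fun h => (e21.mp h) h1), Finset.filter_insert, if_pos (e22.mpr h1),
      Finset.filter_insert, if_pos (em0.mpr h2), Finset.filter_insert,
      if_neg (fun h => (em1.mp h) h2), Finset.filter_singleton, if_pos (em2.mpr h2)]
    decide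
  · rw [if_pos h1, if_neg h2]
    unfold E9
    rw [Finset.filter_insert, if_pos P02, Finset.filter_insert, if_pos P0m2,
      Finset.filter_insert, if_pos (e20.mpr h1), Finset.filter_insert,
      if_neg (fun h => (e21.mp h) h1), Finset.filter_insert, if_pos (e22.mpr h1),
      Finset.filter_insert, if_neg (fun h => h2 (em0.mp h)), Finset.filter_insert,
      if_pos (em1.mpr h2), Finset.filter_singleton, if_neg (fun h => h2 (em2.mp h))]
    decide
  · rw [if_neg h1, if_pos h2]
    unfold E9
    rw [Finset.filter_insert, if_pos P02, Finset.filter_insert, if_pos P0m2,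
      Finset.filter_insert, if_neg (fun h => h1 (e20.mp h)), Finset.filter_insert,
      if_pos (e21.mpr h1), Finset.filter_insert, if_neg (fun h => h1 (e22.mp h)),
      Finset.filter_insert, if_pos (em0.mpr h2), Finset.filter_insert,
      if_neg (fun h => (em1.mp h) h2), Finset.filter_singleton, if_pos (em2.mpr h2)]
    decide
  · rw [if_neg h1, if_neg h2]
    unfold E9
    rw [Finset.filter_insert, if_pos P02, Finset.filter_insert, if_pos P0m2,
      Finset.filter_insert, if_neg (fun h => h1 (e20.mp h)), Finset.filter_insert,
      if_pos (e21.mpr h1), Finset.filter_insert, if_neg (fun h => h1 (e22.mp h)),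
      Finset.filter_insert, if_neg (fun h => h2 (em0.mp h)), Finset.filter_insert,
      if_pos (em1.mpr h2), Finset.filter_singleton, if_neg (fun h => h2 (em2.mp h))]
    decide

end HexGrid

namespace HexGrid

section IsoDist

variable {V W : Type*} {A : SimpleGraph V} {B : SimpleGraph W}

lemma iso_reachable (g : A ≃g B) {u v : V} (h : A.Reachable u v) :
    B.Reachable (g u) (g v) := h.map g.toHom

lemma iso_dist_le (g : A ≃g B) (u v : V) : B.dist (g u) (g v) ≤ A.dist u v := by
  by_cases h : A.Reachable u v
  · obtain ⟨w, hw⟩ := h.exists_walk_length_eq_dist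
    calc B.dist (g u) (g v) ≤ (w.map g.toHom).length := SimpleGraph.dist_le _
      _ = w.length := SimpleGraph.Walk.length_map _ _
      _ = A.dist u v := hw
  · have h2 : ¬ B.Reachable (g u) (g v) := by
      intro hb
      have h3 := iso_reachable g.symm hb
      simp only [RelIso.symm_apply_apply] at h3
      exact h h3
    rw [SimpleGraph.dist_eq_zero_of_not_reachable h,
      SimpleGraph.dist_eq_zero_of_not_reachable h2]

lemma iso_dist (g : A ≃g B) (u v : V) : B.dist (g u) (g v) = A.dist u v := by
  refine le_antisymm (iso_dist_le g u v) ?_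
  have := iso_dist_le g.symm (g u) (g v)
  simpa using this

end IsoDist

/-- the number of code vertices at distance 4 -/
noncomputable def N4 (φ : G → Fin 2) (v : G) : ℕ := Set.ncard {w | φ w = 0 ∧ H.dist v w = 4}

lemma N4_transport (g : H ≃g H) (φ : G → Fin 2) (v : G) :
    N4 (fun w => φ (g w)) v = N4 φ (g v) := by
  unfold N4
  have himg : (⇑g) '' {w | φ (g w) = 0 ∧ H.dist v w = 4}
      = {w | φ w = 0 ∧ H.dist (g v) w = 4} := by
    ext w'
    constructor
    · rintro ⟨w, ⟨h0, hd⟩, rfl⟩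
      exact ⟨h0, (iso_dist g v w).trans hd⟩
    · rintro ⟨h0, hd⟩
      refine ⟨g.symm w', ⟨?_, ?_⟩, by simp⟩
      · simpa using h0
      · have : H.dist (g v) (g (g.symm w')) = H.dist v (g.symm w') := iso_dist g _ _
        simp only [RelIso.apply_symm_apply] at this
        rw [← this, hd]
  rw [← himg, Set.ncard_image_of_injective _ g.injective]

end HexGrid

namespace HexGrid

/-! ### The family of colorings -/

def cseq (n : ℕ) : ℤ → ZMod 2 := fun a => if a = 1 ∨ 2*(n:ℤ) + 13 ≤ a then 1 else 0

lemma ite_zmod_eq (p q : Prop) [Decidable p] [Decidable q] :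
    ((if p then (1 : ZMod 2) else 0) = (if q then 1 else 0)) ↔ (p ↔ q) := by
  by_cases hp : p <;> by_cases hq : q <;> simp [hp, hq]

lemma cseq_eq_iff (n : ℕ) (a b : ℤ) :
    cseq n a = cseq n b ↔ ((a = 1 ∨ 2*(n:ℤ)+13 ≤ a) ↔ (b = 1 ∨ 2*(n:ℤ)+13 ≤ b)) :=
  ite_zmod_eq _ _

lemma N4_col (n : ℕ) (u : G) (hu : col (cseq n) u = 0) :
    N4 (col (cseq n)) u
      = 4 + (if cseq n ((pi u).fst + -2) = cseq n (pi u).fst then 1 else 0)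
          + (if cseq n ((pi u).fst + 2) = cseq n (pi u).fst then 1 else 0) :=
  N4_master _ _ hu

lemma N4_eq4_iff (n : ℕ) (u : G) (hu : col (cseq n) u = 0) :
    N4 (col (cseq n)) u = 4 ↔ (pi u).fst = 1 := by
  have ha := ((col_zero_iff _ _).mp hu).1
  rw [N4_col n u hu]
  have h1 := cseq_eq_iff n ((pi u).fst + -2) (pi u).fst
  have h2 := cseq_eq_iff n ((pi u).fst + 2) (pi u).fst
  by_cases k1 : cseq n ((pi u).fst + -2) = cseq n (pi u).fst <;>
    by_cases k2 : cseq n ((pi u).fst + 2) = cseq n (pi u).fst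
  · rw [if_pos k1, if_pos k2]
    have K1 := h1.mp k1
    constructor
    · intro h; exact absurd h (by norm_num)
    · intro h; exfalso; omega
  · rw [if_pos k1, if_neg k2]
    have K1 := h1.mp k1
    constructor
    · intro h; exact absurd h (by norm_num)
    · intro h; exfalso; omega
  · rw [if_neg k1, if_pos k2]
    have K2 := h2.mp k2
    constructor
    · intro h; exact absurd h (by norm_num)
    · intro h; exfalso; omega
  · rw [if_neg k1, if_neg k2]
    have K1 : ¬((((pi u).fst + -2 = 1 ∨ 2*(n:ℤ)+13 ≤ (pi u).fst + -2))
        ↔ ((pi u).fst = 1 ∨ 2*(n:ℤ)+13 ≤ (pi u).fst)) := fun hh => k1 (h1.mpr hh)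
    have K2 : ¬((((pi u).fst + 2 = 1 ∨ 2*(n:ℤ)+13 ≤ (pi u).fst + 2))
        ↔ ((pi u).fst = 1 ∨ 2*(n:ℤ)+13 ≤ (pi u).fst)) := fun hh => k2 (h2.mpr hh)
    constructor
    · intro _; omega
    · intro _; norm_num

lemma N4_eq5_cases (n : ℕ) (u : G) (hu : col (cseq n) u = 0)
    (h5 : N4 (col (cseq n)) u = 5) :
    (pi u).fst = -1 ∨ (pi u).fst = 3 ∨ (pi u).fst = 2*(n:ℤ)+11 ∨ (pi u).fst = 2*(n:ℤ)+13 := by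
  have ha := ((col_zero_iff _ _).mp hu).1
  rw [N4_col n u hu] at h5
  have h1 := cseq_eq_iff n ((pi u).fst + -2) (pi u).fst
  have h2 := cseq_eq_iff n ((pi u).fst + 2) (pi u).fst
  by_cases k1 : cseq n ((pi u).fst + -2) = cseq n (pi u).fst <;>
    by_cases k2 : cseq n ((pi u).fst + 2) = cseq n (pi u).fst
  · rw [if_pos k1, if_pos k2] at h5; exact absurd h5 (by norm_num)
  · rw [if_pos k1, if_neg k2] at h5
    have K1 := h1.mp k1
    have K2 : ¬((((pi u).fst + 2 = 1 ∨ 2*(n:ℤ)+13 ≤ (pi u).fst + 2))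
        ↔ ((pi u).fst = 1 ∨ 2*(n:ℤ)+13 ≤ (pi u).fst)) := fun hh => k2 (h2.mpr hh)
    omega
  · rw [if_neg k1, if_pos k2] at h5
    have K2 := h2.mp k2
    have K1 : ¬((((pi u).fst + -2 = 1 ∨ 2*(n:ℤ)+13 ≤ (pi u).fst + -2))
        ↔ ((pi u).fst = 1 ∨ 2*(n:ℤ)+13 ≤ (pi u).fst)) := fun hh => k1 (h1.mpr hh)
    omega
  · rw [if_neg k1, if_neg k2] at h5; exact absurd h5 (by norm_num)

/-- membership: the auxiliary fact that suitable offsets stay in the code -/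
lemma col_mem4 (c : ℤ → ZMod 2) (u : G) (o : ℤ × ℤ) (hu : col c u = 0) (ho9 : o ∈ E9)
    (hval : ((o.2 : ℤ) : ZMod 2) + c (pi u).fst = c ((pi u).fst + o.1)) :
    col c (mem4 u o) = 0 := by
  obtain ⟨ha, hb⟩ := (col_zero_iff c u).mp hu
  rw [col_zero_iff, pi_mem4]
  constructor
  · have ho1 : o.1 % 2 = 0 := by fin_cases ho9 <;> decide
    show ((pi u).fst + o.1) % 2 = 1
    omega
  · show (((pi u).snd + o.2 : ℤ) : ZMod 2) + _ = c ((pi u).fst + o.1)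
    push_cast
    linear_combination hb + hval

lemma dist_col_lb {v w : G} (hr : H.Reachable v w) :
    2 * ((pi w).fst - (pi v).fst) - 1 ≤ (H.dist v w : ℤ) := by
  have h := dist_lip F1 adj_F1 hr
  rw [abs_le] at h
  simp only [F1] at h
  cases hwe : (pi w).eps <;> cases hve : (pi v).eps <;>
    rw [hwe, hve] at h <;> simp at h <;> omega

/-! ### predicates invariant under color-preserving isomorphisms -/

def P1 (φ : G → Fin 2) (u : G) : Prop := φ u = 0 ∧ N4 φ u = 4

def Qp (φ : G → Fin 2) (v : G) : Prop :=
  φ v = 0 ∧ N4 φ v = 5 ∧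
    ∀ w, φ w = 0 → H.Reachable v w → H.dist v w ≤ 8 → N4 φ w ≠ 4

lemma P1_transport (g : H ≃g H) (φ : G → Fin 2) (u : G) (h : P1 φ u) :
    P1 (fun w => φ (g w)) (g.symm u) := by
  obtain ⟨h0, h4⟩ := h
  constructor
  · simpa using h0
  · rw [N4_transport g φ (g.symm u)]
    simpa using h4

lemma Qp_transport (g : H ≃g H) (φ : G → Fin 2) (v : G) (h : Qp φ v) :
    Qp (fun w => φ (g w)) (g.symm v) := by
  obtain ⟨h0, h5, hcl⟩ := h
  refine ⟨by simpa using h0, ?_, ?_⟩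
  · rw [N4_transport g φ (g.symm v)]
    simpa using h5
  · intro w hw0 hrw hdw
    rw [N4_transport g φ w]
    have hre : H.Reachable v (g w) := by
      have := iso_reachable g hrw
      simpa using this
    have hde : H.dist v (g w) ≤ 8 := by
      have hd := iso_dist g (g.symm v) w
      simp only [RelIso.apply_symm_apply] at hd
      rw [hd]; exact hdw
    exact hcl (g w) hw0 hre hde

end HexGrid

namespace HexGrid

/-- `φ` is a perfect coloring of `H` with parameter matrix `A`: for every vertex `u` and
every color `j`, the number of neighbors of `u` in `H` colored `j` equals `A (φ u) j`. -/
def IsPerfectColoring {k : ℕ} (φ : G → Fin k) (A : Matrix (Fin k) (Fin k) ℕ) : Prop :=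
  ∀ u : G, ∀ j : Fin k, Set.ncard {v : G | H.Adj u v ∧ φ v = j} = A (φ u) j

/-- A matrix is tridiagonal if its entries vanish whenever the indices differ by more
than one. -/
def IsTridiagonal {k : ℕ} (A : Matrix (Fin k) (Fin k) ℕ) : Prop :=
  ∀ i j : Fin k, ((i : ℕ) + 1 < (j : ℕ) ∨ (j : ℕ) + 1 < (i : ℕ)) → A i j = 0

/-- Two colorings are equivalent if one is obtained from the other by composing with a
graph automorphism of `H`. -/
def EquivColoring {k : ℕ} (φ ψ : G → Fin k) : Prop :=
  ∃ g : H ≃g H, ψ = fun v => φ (g v)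

lemma equiv_symm {k : ℕ} {φ ψ : G → Fin k} (h : EquivColoring φ ψ) : EquivColoring ψ φ := by
  obtain ⟨g, hg⟩ := h
  refine ⟨g.symm, ?_⟩
  funext v
  rw [hg]
  simp

/-! ### the witnesses -/

lemma pi_t_zpow (k : ℤ) : pi (t ^ k) = ⟨k, 0, false⟩ := by
  rw [map_zpow, pi_t, K.zpow_false]
  simp

def ustar : G := t * x

def vstar (m : ℕ) : G := t ^ (2*(m:ℤ)+11) * (s * x)

lemma pi_ustar : pi ustar = ⟨1, 0, true⟩ := by
  simp [ustar, map_mul]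

lemma pi_vstar (m : ℕ) : pi (vstar m) = ⟨2*(m:ℤ)+11, 1, true⟩ := by
  simp [vstar, map_mul, pi_t_zpow]

lemma c1i : (((1:ℤ)) : ZMod 2) = 1 := by rw [intCast_zmod2]; norm_num
lemma cm1i : (((-1:ℤ)) : ZMod 2) = 1 := by rw [intCast_zmod2]; norm_num

lemma col_ustar (m : ℕ) : col (cseq m) ustar = 0 := by
  rw [col_zero_iff, pi_ustar]
  constructor
  · decide
  · show ((0:ℤ) : ZMod 2) + 1 = cseq m 1
    rw [cseq, if_pos (Or.inl rfl)]
    norm_num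

lemma col_vstar (m : ℕ) : col (cseq m) (vstar m) = 0 := by
  rw [col_zero_iff, pi_vstar m]
  constructor
  · show (2*(m:ℤ)+11) % 2 = 1
    omega
  · show ((1:ℤ) : ZMod 2) + 1 = cseq m (2*(m:ℤ)+11)
    rw [cseq, if_neg (by omega), c1i]
    decide

/-! walk words for long horizontal distances -/

def rep2 : ℕ → List (Fin 3)
  | 0 => []
  | (j+1) => 1 :: 0 :: rep2 j

lemma rep2_length (j : ℕ) : (rep2 j).length = 2*j := by
  induction j with
  | zero => rfl
  | succ j ih => simp [rep2, ih]; omega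

lemma pi_wprod_rep2 (j : ℕ) : pi (wprod (rep2 j)) = ⟨-(j:ℤ), 0, false⟩ := by
  induction j with
  | zero => simp [rep2, wprod]
  | succ j ih =>
    show pi (wprod (1 :: 0 :: rep2 j)) = _
    rw [wprod_cons, wprod_cons, map_mul, map_mul, ih, pi_gen, pi_gen]
    show (⟨-1,0,true⟩ : K) * ((⟨0,0,true⟩ : K) * ⟨-(j:ℤ), 0, false⟩) = _
    simp

lemma wprod_append (l1 l2 : List (Fin 3)) : wprod (l1 ++ l2) = wprod l1 * wprod l2 := by
  simp [wprod]

lemma vstar_eq (m : ℕ) : vstar m = ustar * wprod (rep2 (2*m+9) ++ [2,0]) := by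
  apply pi_injective
  rw [map_mul, pi_vstar, pi_ustar, wprod_append, map_mul, pi_wprod_rep2]
  have h20 : pi (wprod [2,0]) = ⟨-1,-1,false⟩ := by
    rw [wprod_cons, wprod_cons, map_mul, map_mul]
    simp [wprod, kgen]
  rw [h20]
  simp
  omega

lemma dist_ustar_vstar (m : ℕ) : H.dist ustar (vstar m) = 4*m + 20 := by
  have hub : H.dist ustar (vstar m) ≤ 4*m + 20 := by
    rw [vstar_eq m]
    have h := dist_word_le ustar (rep2 (2*m+9) ++ [2,0])
    rw [List.length_append, rep2_length] at h
    calc H.dist ustar (ustar * wprod (rep2 (2*m+9) ++ [2,0])) ≤ 2*(2*m+9) + [2,0].length := h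
      _ = 4*m + 20 := by simp; omega
  have hre : H.Reachable ustar (vstar m) := by
    rw [vstar_eq m]; exact reach_word _ _
  have hF := dist_lip F1 adj_F1 hre
  rw [abs_le] at hF
  have e1 : F1 (vstar m) - F1 ustar = 4*m + 20 := by
    simp only [F1, pi_vstar, pi_ustar]
    norm_num
    ring
  rw [e1] at hF
  omega

lemma P1_ustar (m : ℕ) : P1 (col (cseq m)) ustar :=
  ⟨col_ustar m, (N4_eq4_iff m _ (col_ustar m)).mpr (by rw [pi_ustar])⟩

lemma N4_vstar (m : ℕ) : N4 (col (cseq m)) (vstar m) = 5 := by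
  rw [N4_col m _ (col_vstar m)]
  have hfst : (pi (vstar m)).fst = 2*(m:ℤ)+11 := by rw [pi_vstar]
  rw [hfst]
  rw [if_pos ((cseq_eq_iff m _ _).mpr (by omega)),
    if_neg (fun h => absurd ((cseq_eq_iff m _ _).mp h) (by omega))]

lemma Qp_vstar (m : ℕ) : Qp (col (cseq m)) (vstar m) := by
  refine ⟨col_vstar m, N4_vstar m, ?_⟩
  intro w hw0 hrw hdw hN4
  have hcw : (pi w).fst = 1 := (N4_eq4_iff m w hw0).mp hN4
  have hlb := dist_col_lb hrw.symm
  rw [SimpleGraph.dist_comm] at hlb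
  have hfst : (pi (vstar m)).fst = 2*(m:ℤ)+11 := by rw [pi_vstar]
  rw [hfst, hcw] at hlb
  have hdist8 : (H.dist (vstar m) w : ℤ) ≤ 8 := by exact_mod_cast hdw
  omega

lemma Qp_cases (n : ℕ) (v : G) (h : Qp (col (cseq n)) v) :
    (pi v).fst = 2*(n:ℤ)+11 ∨ (pi v).fst = 2*(n:ℤ)+13 := by
  obtain ⟨h0, h5, hcl⟩ := h
  rcases N4_eq5_cases n v h0 h5 with hc | hc | hc | hc
  · exfalso
    have hval : (((2,1).2 : ℤ) : ZMod 2) + cseq n (pi v).fst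
        = cseq n ((pi v).fst + (2,1).1) := by
      show ((1:ℤ) : ZMod 2) + cseq n (pi v).fst = cseq n ((pi v).fst + 2)
      rw [hc, c1i, show (-1 : ℤ) + 2 = 1 by norm_num,
        show cseq n (-1) = 0 from by rw [cseq, if_neg (by omega)],
        show cseq n 1 = 1 from by rw [cseq, if_pos (Or.inl rfl)]]
      decide
    have h9 : ((2:ℤ),(1:ℤ)) ∈ E9 := by decide
    have hw0 : col (cseq n) (mem4 v (2,1)) = 0 := col_mem4 _ v (2,1) h0 h9 hval
    have hd4 : H.dist v (mem4 v (2,1)) = 4 := dist_mem4 v (2,1) h9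
    have hre : H.Reachable v (mem4 v (2,1)) :=
      SimpleGraph.Reachable.of_dist_ne_zero (by omega)
    have hN4w : N4 (col (cseq n)) (mem4 v (2,1)) = 4 := by
      refine (N4_eq4_iff n _ hw0).mpr ?_
      have := pi_mem4 v (2,1)
      rw [this]
      show (pi v).fst + 2 = 1
      omega
    exact hcl _ hw0 hre (by omega) hN4w
  · exfalso
    have hval : (((-2,-1).2 : ℤ) : ZMod 2) + cseq n (pi v).fst
        = cseq n ((pi v).fst + (-2,-1).1) := by
      show ((-1:ℤ) : ZMod 2) + cseq n (pi v).fst = cseq n ((pi v).fst + -2)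
      rw [hc, cm1i, show (3 : ℤ) + -2 = 1 by norm_num,
        show cseq n 3 = 0 from by rw [cseq, if_neg (by omega)],
        show cseq n 1 = 1 from by rw [cseq, if_pos (Or.inl rfl)]]
      decide
    have h9 : ((-2:ℤ),(-1:ℤ)) ∈ E9 := by decide
    have hw0 : col (cseq n) (mem4 v (-2,-1)) = 0 := col_mem4 _ v (-2,-1) h0 h9 hval
    have hd4 : H.dist v (mem4 v (-2,-1)) = 4 := dist_mem4 v (-2,-1) h9
    have hre : H.Reachable v (mem4 v (-2,-1)) :=
      SimpleGraph.Reachable.of_dist_ne_zero (by omega)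
    have hN4w : N4 (col (cseq n)) (mem4 v (-2,-1)) = 4 := by
      refine (N4_eq4_iff n _ hw0).mpr ?_
      have := pi_mem4 v (-2,-1)
      rw [this]
      show (pi v).fst + -2 = 1
      omega
    exact hcl _ hw0 hre (by omega) hN4w
  · exact Or.inl hc
  · exact Or.inr hc

lemma core (m n : ℕ) (hmn : m < n) :
    ¬ EquivColoring (col (cseq m)) (col (cseq n)) := by
  rintro ⟨g, hg⟩
  have hP1 : P1 (col (cseq n)) (g.symm ustar) := by
    rw [hg]; exact P1_transport g _ _ (P1_ustar m)
  have hQ : Qp (col (cseq n)) (g.symm (vstar m)) := by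
    rw [hg]; exact Qp_transport g _ _ (Qp_vstar m)
  have hdist : H.dist (g.symm ustar) (g.symm (vstar m)) = 4*m + 20 := by
    rw [iso_dist g.symm]; exact dist_ustar_vstar m
  have hc1 : (pi (g.symm ustar)).fst = 1 := (N4_eq4_iff n _ hP1.1).mp hP1.2
  have hc2 := Qp_cases n _ hQ
  have hre : H.Reachable (g.symm ustar) (g.symm (vstar m)) :=
    SimpleGraph.Reachable.of_dist_ne_zero (by omega)
  have hlb := dist_col_lb hre
  rw [hdist, hc1] at hlb
  push_cast at hlb
  rcases hc2 with h | h <;> rw [h] at hlb <;> omega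

/-- There are infinitely many pairwise nonequivalent perfect colorings of `H` with
parameter matrix `[[0,3],[1,2]]`. -/
theorem coloring_03_12_infinitely_many :
    ∃ f : ℕ → (G → Fin 2), (∀ n, IsPerfectColoring (f n) !![0,3;1,2]) ∧
      ∀ m n, m ≠ n → ¬ EquivColoring (f m) (f n) := by
  refine ⟨fun n => col (cseq n), fun n u j => col_isPerfect (cseq n) u j, ?_⟩
  intro m n hmn hEq
  rcases hmn.lt_or_gt with h | h
  · exact core m n h hEq
  · exact core n m h (equiv_symm hEq)


end HexGrid
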